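/- arXiv:1308.2972 — 5 statements merged into one kernel-verified Lean document; each statement's English description precedes it below -/
import Mathlib

section
/- With the hypotheses of Lagrange's lemma (a_0 > 0, first negative coefficient a_k, B the largest absolute value among negative coefficients), every real root of f is at most 1 + (B/a_0)^{1/k}. -/
theorem stmt_10 (n : ℕ) (a : ℕ → ℝ) (ha : 0 < a 0)
    (k : ℕ) (hk1 : 1 ≤ k) (hkn : k ≤ n)
    (hak : a k < 0) (hfirst : ∀ j < k, 0 ≤ a j)
    (B : ℝ)
    (hB : ∀ j ≤ n, a j < 0 → |a j| ≤ B)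
    (hBmem : ∃ j ≤ n, a j < 0 ∧ |a j| = B) :
    ∀ x : ℝ, (∑ j ∈ Finset.range (n + 1), a j * x ^ (n - j)) = 0 →
      x ≤ 1 + (B / a 0) ^ ((1 : ℝ) / k) := by
  intro x hsum
  by_contra hcon
  push_neg at hcon
  obtain ⟨j0, hj0n, hj0neg, hj0eq⟩ := hBmem
  have hB0 : 0 < B := hj0eq ▸ abs_pos.mpr (ne_of_lt hj0neg)
  have hdiv : 0 < B / a 0 := div_pos hB0 ha
  set r := (B / a 0) ^ ((1:ℝ)/(k:ℝ)) with hr_def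
  have hr0 : 0 < r := Real.rpow_pos_of_pos hdiv _
  have hx1 : 1 < x := by linarith
  have hx0 : 0 < x := by linarith
  have hxr : r < x - 1 := by linarith
  have hkne : (k:ℝ) ≠ 0 := Nat.cast_ne_zero.mpr (by omega)
  have hrk : r ^ k = B / a 0 := by
    rw [hr_def, ← Real.rpow_natCast ((B / a 0) ^ ((1:ℝ)/(k:ℝ))) k,
      ← Real.rpow_mul hdiv.le, one_div, inv_mul_cancel₀ hkne, Real.rpow_one]
  have hkey : B < a 0 * (x - 1) ^ k := by
    have h1 : r ^ k < (x - 1) ^ k := pow_lt_pow_left₀ hxr hr0.le (by omega)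
    rw [hrk] at h1
    calc B = a 0 * (B / a 0) := by field_simp
    _ < a 0 * (x - 1) ^ k := by exact mul_lt_mul_of_pos_left h1 ha
  set m := n - k with hm
  have hnm : n = m + k := by omega
  -- reindex the tail sum
  have hS : ∑ j ∈ Finset.Ico k (n+1), x ^ (n - j) = ∑ i ∈ Finset.range (m+1), x ^ i := by
    rw [Finset.sum_Ico_eq_sum_range]
    have h1 : n + 1 - k = m + 1 := by omega
    rw [h1]
    rw [← Finset.sum_range_reflect (fun i => x ^ i) (m+1)]
    apply Finset.sum_congr rfl
    intro i hi
    have hi' : i < m + 1 := Finset.mem_range.mp hi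
    congr 1
    omega
  have hsplit : ∑ j ∈ Finset.range (n+1), a j * x ^ (n-j)
      = ∑ j ∈ Finset.range k, a j * x ^ (n-j) + ∑ j ∈ Finset.Ico k (n+1), a j * x ^ (n-j) := by
    rw [Finset.range_eq_Ico, Finset.range_eq_Ico]
    exact (Finset.sum_Ico_consecutive (fun j => a j * x ^ (n-j)) (Nat.zero_le k) (by omega : k ≤ n + 1)).symm
  have h1 : a 0 * x ^ n ≤ ∑ j ∈ Finset.range k, a j * x ^ (n-j) := by
    have := Finset.single_le_sum (f := fun j => a j * x ^ (n-j))
      (fun j hj => mul_nonneg (hfirst j (Finset.mem_range.mp hj)) (pow_nonneg hx0.le _))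
      (Finset.mem_range.mpr (by omega : 0 < k))
    simpa using this
  have haB : ∀ j ≤ n, -B ≤ a j := by
    intro j hj
    by_cases h : a j < 0
    · have := hB j hj h; rw [abs_of_neg h] at this; linarith
    · push_neg at h; linarith
  have h2 : -B * (∑ j ∈ Finset.Ico k (n+1), x ^ (n-j)) ≤ ∑ j ∈ Finset.Ico k (n+1), a j * x ^ (n-j) := by
    rw [Finset.mul_sum]
    apply Finset.sum_le_sum
    intro j hj
    have hjn : j ≤ n := by have := (Finset.mem_Ico.mp hj).2; omega
    exact mul_le_mul_of_nonneg_right (haB j hjn) (pow_nonneg hx0.le _)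
  set G := ∑ i ∈ Finset.range (m+1), x ^ i with hGdef
  have hG : G * (x - 1) = x ^ (m+1) - 1 := geom_sum_mul x (m+1)
  have hGnonneg : 0 ≤ G :=
    Finset.sum_nonneg fun i _ => pow_nonneg hx0.le _
  -- key product inequality: B * G < a 0 * x ^ n
  have hpow : x ^ n = x ^ (m+1) * x ^ (k-1) := by
    rw [← pow_add]; congr 1; omega
  have hxk1 : (x-1) ^ (k-1) ≤ x ^ (k-1) := pow_le_pow_left₀ (by linarith) (by linarith) _
  have hxk1' : 0 ≤ (x-1) ^ (k-1) := pow_nonneg (by linarith) _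
  have hwk : (x-1) ^ k = (x-1) ^ (k-1) * (x-1) := by
    rw [← pow_succ]; congr 1; omega
  have hxm1 : 0 < x ^ (m+1) := pow_pos hx0 _
  have hmain : B * G < a 0 * x ^ n := by
    have hstep : B * G * (x - 1) < a 0 * x ^ n * (x - 1) := by
      have e1 : B * G * (x-1) = B * (x^(m+1) - 1) := by rw [mul_assoc, hG]
      have e2 : a 0 * x ^ n * (x-1) = a 0 * ((x-1)^(k-1) * (x-1)) * x^(m+1)
          + a 0 * (x^(k-1) - (x-1)^(k-1)) * (x-1) * x^(m+1) := by
        rw [hpow]; ring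
      rw [e1, e2, ← hwk]
      have t1 : B * x^(m+1) < a 0 * (x-1)^k * x^(m+1) :=
        mul_lt_mul_of_pos_right hkey hxm1
      have t2 : 0 ≤ a 0 * (x^(k-1) - (x-1)^(k-1)) * (x-1) * x^(m+1) := by
        apply mul_nonneg
        apply mul_nonneg
        apply mul_nonneg ha.le (by linarith)
        all_goals linarith
      nlinarith [hB0, hxm1]
    exact lt_of_mul_lt_mul_right hstep (by linarith)
  have : 0 < ∑ j ∈ Finset.range (n+1), a j * x ^ (n-j) := by
    rw [hsplit]
    have h2' : -(B * G) ≤ ∑ j ∈ Finset.Ico k (n+1), a j * x ^ (n-j) := by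
      calc -(B * G) = -B * ∑ j ∈ Finset.Ico k (n+1), x ^ (n-j) := by rw [hS]; ring
      _ ≤ _ := h2
    linarith
  linarith [this, hsum.le, hsum.ge]
end

section
/- Key inequality in Lagrange's lemma: for real x > 1, integers n ≥ k ≥ 1, and reals a_0, B > 0, one has a_0 x^n - B·(x^{n-k+1} - 1)/(x - 1) > (x^{n-k+1}/(x-1))·(a_0 (x-1)^k - B). -/
theorem stmt_11 (x : ℝ) (hx : 1 < x) (n k : ℕ) (hk1 : 1 ≤ k) (hkn : k ≤ n)
    (a₀ B : ℝ) (ha₀ : 0 < a₀) (hB : 0 < B) :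
    (x ^ (n - k + 1) / (x - 1)) * (a₀ * (x - 1) ^ k - B) <
      a₀ * x ^ n - B * ((x ^ (n - k + 1) - 1) / (x - 1)) := by
  have hx1 : (0:ℝ) < x - 1 := by linarith
  have hxpos : (0:ℝ) < x := by linarith
  have key : x ^ (n - k + 1) * (x - 1) ^ k ≤ x ^ n * (x - 1) := by
    have h1 : (x - 1) ^ (k - 1) ≤ x ^ (k - 1) :=
      pow_le_pow_left₀ (le_of_lt hx1) (by linarith) _
    calc x ^ (n - k + 1) * (x - 1) ^ k
        = x ^ (n - k + 1) * ((x - 1) ^ (k - 1) * (x - 1)) := by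
          rw [← pow_succ]; congr 2; omega
      _ ≤ x ^ (n - k + 1) * (x ^ (k - 1) * (x - 1)) := by
          gcongr
      _ = x ^ n * (x - 1) := by
          rw [← mul_assoc, ← pow_add]; congr 2; omega
  rw [div_mul_eq_mul_div, div_lt_iff₀ hx1, sub_mul, mul_assoc B, div_mul_cancel₀ _ (ne_of_gt hx1)]
  nlinarith [key, hB]
end

section
/- (Optimality) With notation as in the existence theorem, if 0 < b' < b where b is the largest positive root of the Horner truncations f_1, ..., f_n, then at least one of f_1(b'), ..., f_n(b') is strictly negative; i.e., no smaller value of b yields a quotient and remainder with all nonnegative coefficients. -/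
/-- Horner truncations of the polynomial with coefficients `a 0, a 1, ...`:
`horner a 0 x = a 0`, `horner a (k+1) x = x * horner a k x + a (k+1)`. -/
def horner (a : ℕ → ℝ) : ℕ → ℝ → ℝ
  | 0, _ => a 0
  | k + 1, x => x * horner a k x + a (k + 1)

theorem stmt_15 (n : ℕ) (a : ℕ → ℝ) (ha : 0 < a 0)
    (hroot : ∃ x : ℝ, 0 < x ∧ horner a n x = 0)
    (b : ℝ) (hb : 0 < b)
    (hbroot : ∃ k, 1 ≤ k ∧ k ≤ n ∧ horner a k b = 0)
    (hbmax : ∀ (x : ℝ) (k : ℕ), 1 ≤ k → k ≤ n → 0 < x → horner a k x = 0 → x ≤ b) :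
    ∀ b' : ℝ, 0 < b' → b' < b → ∃ k, 1 ≤ k ∧ k ≤ n ∧ horner a k b' < 0 := by
  intro b' hb'pos hb'lt
  by_contra hcon
  push_neg at hcon
  have key : ∀ k, 1 ≤ k → k ≤ n → 0 ≤ horner a k b' ∧ horner a k b' < horner a k b := by
    intro k
    induction k with
    | zero => omega
    | succ m ih =>
      intro _ hle
      have h0 : 0 ≤ horner a (m + 1) b' := hcon (m + 1) (by omega) hle
      refine ⟨h0, ?_⟩
      cases m with
      | zero =>
        show b' * horner a 0 b' + a 1 < b * horner a 0 b + a 1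
        show b' * a 0 + a 1 < b * a 0 + a 1
        nlinarith
      | succ l =>
        obtain ⟨h1, h2⟩ := ih (by omega) (by omega)
        show b' * horner a (l + 1) b' + a (l + 2) < b * horner a (l + 1) b + a (l + 2)
        nlinarith
  obtain ⟨p, hp1, hpn, hpb⟩ := hbroot
  have h := key p hp1 hpn
  linarith [h.1, h.2]
end

section
/- (Conjecture, now theorem) Let f be a real polynomial with positive leading coefficient having at least one positive root a. Then there exists b ≥ a such that when f is divided by (x - b), the remainder is nonnegative and all nonzero coefficients of the quotient polynomial are positive. -/
open Polynomial in
theorem stmt_16 (f : ℝ[X]) (hf : 0 < f.leadingCoeff)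
    (a : ℝ) (ha : 0 < a) (haroot : f.eval a = 0) :
    ∃ b ≥ a, ∃ (q : ℝ[X]) (r : ℝ),
      f = (X - C b) * q + C r ∧ 0 ≤ r ∧
      ∀ i, q.coeff i ≠ 0 → 0 < q.coeff i := by
  have hf0 : f ≠ 0 := fun h => by simp [h] at hf
  set d := f.natDegree with hd
  set c := f.leadingCoeff with hc
  have hdeg : 0 < f.degree := by
    rcases lt_or_ge 0 f.degree with h | h
    · exact h
    · exfalso
      have : f.natDegree = 0 := natDegree_le_iff_degree_le.mpr (by exact_mod_cast h) |> Nat.le_zero.mp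
      have hfc : f = C (f.coeff 0) := eq_C_of_natDegree_eq_zero this
      have : f.coeff 0 = 0 := by
        have := haroot; rw [hfc] at this; simpa using this
      rw [hfc, this] at hf0; simp at hf0
  have hd1 : 1 ≤ d := natDegree_pos_iff_degree_pos.mpr hdeg
  set M : ℝ := ∑ i ∈ Finset.range (d + 1), |f.coeff i| with hM
  have hMle : ∀ i, i ≤ d → |f.coeff i| ≤ M := by
    intro i hi
    exact Finset.single_le_sum (f := fun j => |f.coeff j|)
      (fun j _ => abs_nonneg _) (Finset.mem_range.mpr (Nat.lt_succ_of_le hi))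
  have hM0 : 0 ≤ M := Finset.sum_nonneg fun j _ => abs_nonneg _
  -- choose b
  have htt : Filter.Tendsto (fun x => f.eval x) Filter.atTop Filter.atTop :=
    f.tendsto_atTop_of_leadingCoeff_nonneg hdeg hf.le
  have hev : ∀ᶠ b in Filter.atTop, a ≤ b ∧ (M + c) / c ≤ b ∧ 0 ≤ f.eval b := by
    filter_upwards [Filter.eventually_ge_atTop a,
      Filter.eventually_ge_atTop ((M + c) / c), htt.eventually_ge_atTop 0] with b h1 h2 h3
    exact ⟨h1, h2, h3⟩
  obtain ⟨b, hba, hbMc, hbev⟩ := hev.exists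
  have hbc : M + c ≤ b * c := by
    rwa [div_le_iff₀ hf] at hbMc
  refine ⟨b, hba, f /ₘ (X - C b), f.eval b, ?_, hbev, ?_⟩
  · conv_lhs => rw [← f.modByMonic_add_div (X - C b)]
    rw [modByMonic_X_sub_C_eq_C_eval]; ring
  · set q := f /ₘ (X - C b) with hq
    have key : ∀ k, k < d → c ≤ q.coeff (d - 1 - k) := by
      intro k
      induction k with
      | zero =>
        intro _
        rw [hq, coeff_divByMonic_X_sub_C]
        have : d - 1 - 0 + 1 = d := by omega
        rw [this, Finset.Icc_self, Finset.sum_singleton, Nat.sub_self, pow_zero, one_mul]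
        rw [hc, leadingCoeff]
      | succ k ih =>
        intro hk
        have hk' : k < d := by omega
        have ihk := ih hk'
        have hsucc : d - 1 - (k + 1) + 1 = d - 1 - k := by omega
        rw [hq, coeff_divByMonic_X_sub_C_rec, hsucc, ← hq]
        have hb0 : 0 < b := lt_of_lt_of_le ha hba
        have h1 : -M ≤ f.coeff (d - 1 - k) := by
          have := hMle (d - 1 - k) (by omega)
          linarith [neg_abs_le (f.coeff (d - 1 - k))]
        have h2 : b * c ≤ b * q.coeff (d - 1 - k) :=
          mul_le_mul_of_nonneg_left ihk hb0.le
        linarith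
    intro i hi
    rcases lt_or_ge i d with h | h
    · have := key (d - 1 - i) (by omega)
      have heq : d - 1 - (d - 1 - i) = i := by omega
      rw [heq] at this
      linarith
    · exfalso
      apply hi
      apply coeff_eq_zero_of_natDegree_lt
      rw [hq, natDegree_divByMonic f (monic_X_sub_C b), natDegree_X_sub_C]
      omega
end

section
/- Suppose b > 0 satisfies: the Horner truncations of f at b satisfy f_1(b), ..., f_{n-1}(b) ≥ 0 and f_n(b) > 0, where f has positive leading coefficient. Then for every b' ≥ b, also f_1(b'), ..., f_{n-1}(b') ≥ 0 and f_n(b') > 0; i.e., the set of b that 'work' is an upward-closed interval. -/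
theorem stmt_19 (n : ℕ) (a : ℕ → ℝ) (ha : 0 < a 0) (b : ℝ) (hb : 0 < b)
    (hnonneg : ∀ k, 1 ≤ k → k ≤ n - 1 → 0 ≤ horner a k b)
    (hpos : 0 < horner a n b) :
    ∀ b' : ℝ, b ≤ b' →
      (∀ k, 1 ≤ k → k ≤ n - 1 → 0 ≤ horner a k b') ∧ 0 < horner a n b' := by
  intro b' hbb'
  have key : ∀ k, k ≤ n → 0 ≤ horner a k b ∧ horner a k b ≤ horner a k b' := by
    intro k
    induction k with
    | zero => intro _; exact ⟨le_of_lt ha, by simp [horner]⟩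
    | succ k ih =>
      intro hk
      have hk' : k ≤ n := Nat.le_of_succ_le hk
      obtain ⟨h0, hmono⟩ := ih hk'
      have h0' : 0 ≤ horner a k b := h0
      constructor
      · rcases Nat.eq_zero_or_pos k with h | h
        · subst h
          rcases Nat.eq_zero_or_pos n with hn | hn
          · omega
          · rcases Nat.lt_or_ge 1 n with h1 | h1
            · exact hnonneg 1 le_rfl (by omega)
            · interval_cases n
              · simpa [horner] using le_of_lt hpos
        · rcases Nat.lt_or_ge (k + 1) n with h1 | h1
          · exact hnonneg (k + 1) (by omega) (by omega)
          · have : k + 1 = n := by omega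
            rw [this]; exact le_of_lt hpos
      · show b * horner a k b + a (k+1) ≤ b' * horner a k b' + a (k+1)
        have h1 : b * horner a k b ≤ b' * horner a k b' := by
          calc b * horner a k b ≤ b' * horner a k b :=
                mul_le_mul_of_nonneg_right hbb' h0
            _ ≤ b' * horner a k b' :=
                mul_le_mul_of_nonneg_left hmono (le_trans (le_of_lt hb) hbb')
        linarith
  constructor
  · intro k hk1 hk2
    have hk : k ≤ n := by omega
    obtain ⟨h0, hmono⟩ := key k hk
    linarith
  · obtain ⟨h0, hmono⟩ := key n le_rfl
    linarith
end
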